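/- For any non-zero symmetric real n×n matrix A with entries a_{i,j}, the rank of A is at least (∑_i a_{i,i})² / (∑_{i,j} a_{i,j}²). -/

import Mathlib

theorem rank_lower_bound (n : ℕ) (A : Matrix (Fin n) (Fin n) ℝ)
    (hA : A.IsSymm) (hA0 : A ≠ 0) :
    ((∑ i, A i i) ^ 2) / (∑ i, ∑ j, (A i j) ^ 2) ≤ (A.rank : ℝ) := by
  have hH : A.IsHermitian := by
    rwa [Matrix.IsHermitian, Matrix.conjTranspose_eq_transpose_of_trivial]
  set μ := hH.eigenvalues with hμ
  -- trace
  have hU : (star (hH.eigenvectorUnitary : Matrix (Fin n) (Fin n) ℝ)) *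
      (hH.eigenvectorUnitary : Matrix (Fin n) (Fin n) ℝ) = 1 := by
    exact Unitary.coe_star_mul_self _
  have htr : ∑ i, A i i = ∑ i, μ i := by
    have := congrArg Matrix.trace hH.spectral_theorem
    rw [Unitary.conjStarAlgAut_apply, Matrix.trace_mul_cycle, hU, Matrix.one_mul] at this
    simpa [Matrix.trace, Matrix.diag] using this
  have hfr : ∑ i, ∑ j, (A i j) ^ 2 = ∑ i, (μ i) ^ 2 := by
    have hAA : (A * A).trace = ∑ i, (μ i) ^ 2 := by
      have h2 : A * A = (hH.eigenvectorUnitary : Matrix (Fin n) (Fin n) ℝ) *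
          (Matrix.diagonal (RCLike.ofReal ∘ μ) * Matrix.diagonal (RCLike.ofReal ∘ μ)) *
          (star (hH.eigenvectorUnitary : Matrix (Fin n) (Fin n) ℝ)) := by
        conv_lhs => rw [hH.spectral_theorem, Unitary.conjStarAlgAut_apply]
        simp only [Matrix.mul_assoc]
        rw [← Matrix.mul_assoc (star _) _, hU, Matrix.one_mul]
      rw [h2, Matrix.trace_mul_cycle, ← Matrix.mul_assoc, hU, Matrix.one_mul]
      simp [Matrix.diagonal_mul_diagonal, Matrix.trace, Matrix.diag, sq]
    rw [← hAA]
    simp only [Matrix.trace, Matrix.diag, Matrix.mul_apply]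
    rw [Finset.sum_comm]
    refine Finset.sum_congr rfl fun i _ => Finset.sum_congr rfl fun j _ => ?_
    have : A j i = A i j := by
      conv_lhs => rw [← hA]
      rfl
    rw [this, sq]
  rw [htr, hfr]
  have hrank : (A.rank : ℝ) = (Fintype.card {i // μ i ≠ 0} : ℝ) := by
    exact_mod_cast hH.rank_eq_card_non_zero_eigs
  rw [hrank]
  -- Cauchy-Schwarz on nonzero eigenvalues
  classical
  set s : Finset (Fin n) := Finset.univ.filter fun i => μ i ≠ 0 with hs
  have hcard : (Fintype.card {i // μ i ≠ 0}) = s.card := by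
    simp [hs, Fintype.card_subtype]
  have hsum : ∑ i, μ i = ∑ i ∈ s, μ i := by
    rw [hs]
    exact (Finset.sum_filter_ne_zero Finset.univ).symm
  have hsumsq : ∑ i, (μ i) ^ 2 = ∑ i ∈ s, (μ i) ^ 2 := by
    rw [hs]
    refine (Finset.sum_filter_of_ne fun i _ h => ?_).symm
    intro h0
    simp [h0] at h
  rw [hsum, hsumsq, hcard]
  have hCS : (∑ i ∈ s, μ i) ^ 2 ≤ s.card * ∑ i ∈ s, (μ i) ^ 2 :=
    sq_sum_le_card_mul_sum_sq
  have hpos : 0 < ∑ i ∈ s, (μ i) ^ 2 := by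
    rcases lt_or_eq_of_le (Finset.sum_nonneg fun i _ => sq_nonneg (μ i)) with h | h
    · exact h
    · exfalso
      apply hA0
      have hall : ∀ i, μ i = 0 := by
        intro i
        by_contra hi
        have h2 := (Finset.sum_eq_zero_iff_of_nonneg
          (fun i _ => sq_nonneg (μ i))).mp h.symm i (by simp [hs, hi])
        exact hi ((pow_eq_zero_iff two_ne_zero).mp h2)
      have hd : Matrix.diagonal (RCLike.ofReal ∘ hH.eigenvalues)
          = (0 : Matrix (Fin n) (Fin n) ℝ) := by
        ext i j
        simp [Matrix.diagonal, show hH.eigenvalues i = 0 from hall i]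
      rw [hH.spectral_theorem, Unitary.conjStarAlgAut_apply, hd, Matrix.mul_zero, Matrix.zero_mul]
  rw [div_le_iff₀ hpos]
  exact hCS
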